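/- Let G = (V,E) be a graph with V a discrete subset of ℝⁿ in which every vertex has finite degree. Then the independence ratio ᾱ(G) = sup over independent sets A of limsup_{R→∞} |A∩V_R|/|V_R| equals limsup_{R→∞} ᾱ(G_R), where V_R = V ∩ [−R,R]ⁿ and G_R is the induced subgraph on V_R with independence ratio α(G_R)/|V_R|. -/

import Mathlib

open MeasureTheory Filter Set Pointwise

noncomputable def box (n : ℕ) (R : ℝ) : Set (Fin n → ℝ) := {x | ∀ i, |x i| ≤ R}

noncomputable def density (n : ℕ) (A : Set (Fin n → ℝ)) : ℝ :=
  Filter.limsup (fun R : ℝ =>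
    (volume (A ∩ box n R)).toReal / (volume (box n R)).toReal) Filter.atTop

def AvoidsOne (n : ℕ) (N : (Fin n → ℝ) → ℝ) (A : Set (Fin n → ℝ)) : Prop :=
  ∀ x ∈ A, ∀ y ∈ A, N (x - y) ≠ 1

noncomputable def m1 (n : ℕ) (N : (Fin n → ℝ) → ℝ) : ℝ :=
  sSup {d : ℝ | ∃ A : Set (Fin n → ℝ), MeasurableSet A ∧ AvoidsOne n N A ∧ d = density n A}

noncomputable def polyNorm (n : ℕ) (P : Set (Fin n → ℝ)) (x : Fin n → ℝ) : ℝ :=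
  sInf {l : ℝ | 0 ≤ l ∧ x ∈ l • P}

def IsSymmPolytope (n : ℕ) (P : Set (Fin n → ℝ)) : Prop :=
  Convex ℝ P ∧ (∀ x ∈ P, -x ∈ P) ∧ ∃ F : Finset (Fin n → ℝ), P = convexHull ℝ (↑F : Set (Fin n → ℝ))

def TilesBy (n : ℕ) (P : Set (Fin n → ℝ)) (Λ : Set (Fin n → ℝ)) : Prop :=
  (⋃ l ∈ Λ, (l +ᵥ P)) = Set.univ ∧
  (Λ.Pairwise fun a b => interior (a +ᵥ P) ∩ interior (b +ᵥ P) = ∅)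

lemma box_mono {n : ℕ} {R R' : ℝ} (h : R ≤ R') : box n R ⊆ box n R' :=
  fun _ hx i => (hx i).trans h

lemma finite_subset_box {n : ℕ} {T : Set (Fin n → ℝ)} (hT : T.Finite) :
    ∃ R : ℝ, T ⊆ box n R := by
  refine Set.Finite.induction_on (motive := fun T _ => ∃ R : ℝ, T ⊆ box n R) _ hT ⟨0, empty_subset _⟩ ?_
  rintro a s - - ⟨R, hR⟩
  refine ⟨max R ‖a‖, Set.insert_subset ?_ (hR.trans (box_mono (le_max_left _ _)))⟩
  intro i
  calc |a i| = ‖a i‖ := rfl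
  _ ≤ ‖a‖ := norm_le_pi_norm a i
  _ ≤ max R ‖a‖ := le_max_right _ _

noncomputable def alph (n : ℕ) (V : Set (Fin n → ℝ))
    (Adj : (Fin n → ℝ) → (Fin n → ℝ) → Prop) (R : ℝ) : ℕ :=
  sSup {k : ℕ | ∃ S ⊆ V ∩ box n R, (∀ x ∈ S, ∀ y ∈ S, ¬ Adj x y) ∧ S.ncard = k}

noncomputable def ratio (n : ℕ) (V : Set (Fin n → ℝ))
    (Adj : (Fin n → ℝ) → (Fin n → ℝ) → Prop) (R : ℝ) : ℝ :=
  ((alph n V Adj R : ℕ) : ℝ) / ((V ∩ box n R).ncard : ℝ)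

noncomputable def gratio (n : ℕ) (V A : Set (Fin n → ℝ)) (R : ℝ) : ℝ :=
  ((A ∩ box n R).ncard : ℝ) / ((V ∩ box n R).ncard : ℝ)

section lems
variable {n : ℕ} {V : Set (Fin n → ℝ)} {Adj : (Fin n → ℝ) → (Fin n → ℝ) → Prop}

lemma alph_bddAbove (hfin : (V ∩ box n R).Finite) :
    BddAbove {k : ℕ | ∃ S ⊆ V ∩ box n R, (∀ x ∈ S, ∀ y ∈ S, ¬ Adj x y) ∧ S.ncard = k} := by
  refine ⟨(V ∩ box n R).ncard, ?_⟩
  rintro k ⟨S, hS, -, rfl⟩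
  exact Set.ncard_le_ncard hS hfin

lemma alph_spec {R : ℝ} (hfin : (V ∩ box n R).Finite) :
    ∃ S, S ⊆ V ∩ box n R ∧ (∀ x ∈ S, ∀ y ∈ S, ¬ Adj x y) ∧ S.ncard = alph n V Adj R := by
  have h0 : (0 : ℕ) ∈ {k : ℕ | ∃ S ⊆ V ∩ box n R, (∀ x ∈ S, ∀ y ∈ S, ¬ Adj x y) ∧ S.ncard = k} :=
    ⟨∅, empty_subset _, by simp, by simp⟩
  exact Nat.sSup_mem ⟨0, h0⟩ (alph_bddAbove hfin)

lemma le_alph {R : ℝ} (hfin : (V ∩ box n R).Finite) {S : Set (Fin n → ℝ)}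
    (hS : S ⊆ V ∩ box n R) (hind : ∀ x ∈ S, ∀ y ∈ S, ¬ Adj x y) :
    S.ncard ≤ alph n V Adj R :=
  le_csSup (alph_bddAbove hfin) ⟨S, hS, hind, rfl⟩

lemma div_le_div_nonneg_right {x y c : ℝ} (h : x ≤ y) (hc : 0 ≤ c) : x / c ≤ y / c := by
  rcases hc.eq_or_lt with h0 | h0
  · simp [← h0]
  · exact (div_le_div_iff_of_pos_right h0).2 h

lemma ratio_nonneg (R : ℝ) : 0 ≤ ratio n V Adj R := by
  exact div_nonneg (Nat.cast_nonneg _) (Nat.cast_nonneg _)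

lemma ratio_le_one {R : ℝ} (hfin : (V ∩ box n R).Finite) : ratio n V Adj R ≤ 1 := by
  obtain ⟨S, hS, -, hcard⟩ := alph_spec (Adj := Adj) hfin
  exact div_le_one_of_le₀ (Nat.cast_le.2 (hcard ▸ Set.ncard_le_ncard hS hfin)) (Nat.cast_nonneg _)

lemma gratio_le_ratio {A : Set (Fin n → ℝ)} (hA : A ⊆ V)
    (hind : ∀ x ∈ A, ∀ y ∈ A, ¬ Adj x y) {R : ℝ} (hfin : (V ∩ box n R).Finite) :
    gratio n V A R ≤ ratio n V Adj R := by
  refine div_le_div_nonneg_right (Nat.cast_le.2 ?_) (Nat.cast_nonneg _)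
  exact le_alph hfin (Set.inter_subset_inter_left _ hA)
    (fun x hx y hy => hind x hx.1 y hy.1)

theorem independence_ratio_eq_limsup_finite_ratios
    (n : ℕ) (V : Set (Fin n → ℝ)) (Adj : (Fin n → ℝ) → (Fin n → ℝ) → Prop)
    (hsym : Symmetric Adj) (hirr : Irreflexive Adj)
    (hdisc : ∀ R : ℝ, (V ∩ box n R).Finite)
    (hdeg : ∀ v ∈ V, {w | w ∈ V ∧ Adj v w}.Finite) :
    sSup {d : ℝ | ∃ A ⊆ V, (∀ x ∈ A, ∀ y ∈ A, ¬ Adj x y) ∧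
        d = Filter.limsup (fun R : ℝ =>
          ((A ∩ box n R).ncard : ℝ) / ((V ∩ box n R).ncard : ℝ)) Filter.atTop}
      = Filter.limsup (fun R : ℝ =>
          ((sSup {k : ℕ | ∃ S ⊆ V ∩ box n R,
              (∀ x ∈ S, ∀ y ∈ S, ¬ Adj x y) ∧ S.ncard = k} : ℕ) : ℝ)
            / ((V ∩ box n R).ncard : ℝ)) Filter.atTop := by
  classical
  show sSup {d : ℝ | ∃ A ⊆ V, (∀ x ∈ A, ∀ y ∈ A, ¬ Adj x y) ∧
        d = Filter.limsup (gratio n V A) Filter.atTop}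
      = Filter.limsup (ratio n V Adj) Filter.atTop
  set L := Filter.limsup (ratio n V Adj) Filter.atTop with hL
  have hFb : Filter.IsBoundedUnder (· ≤ ·) Filter.atTop (ratio n V Adj) :=
    isBoundedUnder_of ⟨1, fun R => ratio_le_one (hdisc R)⟩
  have hFlow : Filter.IsBoundedUnder (· ≥ ·) Filter.atTop (ratio n V Adj) :=
    isBoundedUnder_of ⟨0, fun R => ratio_nonneg R⟩
  have hFcob : Filter.IsCoboundedUnder (· ≤ ·) Filter.atTop (ratio n V Adj) :=
    hFlow.isCoboundedUnder_le
  have hgb : ∀ A : Set (Fin n → ℝ), A ⊆ V →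
      Filter.IsBoundedUnder (· ≤ ·) Filter.atTop (gratio n V A) := by
    intro A hAV
    refine isBoundedUnder_of ⟨1, fun R => ?_⟩
    exact div_le_one_of_le₀
      (Nat.cast_le.2 (Set.ncard_le_ncard (inter_subset_inter hAV Subset.rfl) (hdisc R)))
      (Nat.cast_nonneg _)
  have hgcob : ∀ A : Set (Fin n → ℝ),
      Filter.IsCoboundedUnder (· ≤ ·) Filter.atTop (gratio n V A) := by
    intro A
    exact (isBoundedUnder_of ⟨0, fun R =>
      div_nonneg (Nat.cast_nonneg _) (Nat.cast_nonneg _)⟩ :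
        Filter.IsBoundedUnder (· ≥ ·) Filter.atTop (gratio n V A)).isCoboundedUnder_le
  have hub : ∀ d ∈ {d : ℝ | ∃ A ⊆ V, (∀ x ∈ A, ∀ y ∈ A, ¬ Adj x y) ∧
      d = Filter.limsup (gratio n V A) Filter.atTop}, d ≤ L := by
    rintro d ⟨A, hAV, hAind, rfl⟩
    exact Filter.limsup_le_limsup
      (Filter.Eventually.of_forall fun R => gratio_le_ratio hAV hAind (hdisc R))
      (hgcob A) hFb
  have hex : ∃ A, A ⊆ V ∧ (∀ x ∈ A, ∀ y ∈ A, ¬ Adj x y) ∧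
      L ≤ Filter.limsup (gratio n V A) Filter.atTop := by
    rcases V.finite_or_infinite with hV | hV
    · -- finite case
      obtain ⟨R₀, hR₀⟩ := finite_subset_box hV
      have hVR : ∀ R, R₀ ≤ R → V ∩ box n R = V := fun R hR =>
        inter_eq_left.2 (hR₀.trans (box_mono hR))
      obtain ⟨S, hSsub, hSind, hScard⟩ := alph_spec (Adj := Adj) (hdisc R₀)
      have hSbox : S ⊆ box n R₀ := hSsub.trans inter_subset_right
      refine ⟨S, hSsub.trans inter_subset_left, hSind, ?_⟩
      have hcongF : ratio n V Adj =ᶠ[Filter.atTop] fun _ => ratio n V Adj R₀ := by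
        filter_upwards [Filter.eventually_ge_atTop R₀] with R hR
        unfold ratio alph
        rw [hVR R hR, hVR R₀ le_rfl]
      have hcongG : gratio n V S =ᶠ[Filter.atTop] fun _ => ratio n V Adj R₀ := by
        filter_upwards [Filter.eventually_ge_atTop R₀] with R hR
        unfold gratio ratio
        rw [hVR R hR, hVR R₀ le_rfl, inter_eq_left.2 (hSbox.trans (box_mono hR)), hScard]
      rw [hL, Filter.limsup_congr hcongF, Filter.limsup_congr hcongG]
    · -- infinite case
      set B : ℝ → Set (Fin n → ℝ) :=
        fun s => (V ∩ box n s) ∪ ⋃ v ∈ V ∩ box n s, {w | w ∈ V ∧ Adj v w} with hB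
      have hBfin : ∀ s, (B s).Finite := fun s =>
        (hdisc s).union ((hdisc s).biUnion fun v hv => hdeg v hv.1)
      have hBmem : ∀ s x y, x ∈ V ∩ box n s → y ∈ V → Adj x y → y ∈ B s :=
        fun s x y hx hy hadj => Or.inr (Set.mem_biUnion hx ⟨hy, hadj⟩)
      have hcount : ∀ m : ℕ, ∀ᶠ R in Filter.atTop, m ≤ (V ∩ box n R).ncard := by
        intro m
        obtain ⟨T, hTV, hTfin, hTcard⟩ := hV.exists_subset_ncard_eq m
        obtain ⟨R₀, hR₀⟩ := finite_subset_box hTfin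
        filter_upwards [Filter.eventually_ge_atTop R₀] with R hR
        calc m = T.ncard := hTcard.symm
        _ ≤ (V ∩ box n R).ncard :=
            Set.ncard_le_ncard (subset_inter hTV (hR₀.trans (box_mono hR))) (hdisc R)
      have hstep : ∀ (k : ℕ) (s : ℝ), ∃ R : ℝ,
          (L - 1 / ((k : ℝ) + 1) < ratio n V Adj R) ∧
          (s + 1 ≤ R ∧ (k + 1) * ((B s).ncard + 1) ≤ (V ∩ box n R).ncard) := by
        intro k s
        have hpos : (0:ℝ) < 1 / ((k:ℝ) + 1) := by positivity
        have h1 : ∃ᶠ R in Filter.atTop, L - 1 / ((k : ℝ) + 1) < ratio n V Adj R :=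
          Filter.frequently_lt_of_lt_limsup hFcob (hL ▸ (by linarith : L - 1/((k:ℝ)+1) < L))
        exact (h1.and_eventually ((Filter.eventually_ge_atTop (s+1)).and (hcount _))).exists
      let r : ℕ → ℝ := fun k => Nat.rec 0 (fun k rk => Classical.choose (hstep k rk)) k
      have hrspec : ∀ k : ℕ,
          (L - 1 / ((k : ℝ) + 1) < ratio n V Adj (r (k+1))) ∧
          (r k + 1 ≤ r (k+1) ∧
            (k + 1) * ((B (r k)).ncard + 1) ≤ (V ∩ box n (r (k+1))).ncard) :=
        fun k => Classical.choose_spec (hstep k (r k))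
      have hrstep : ∀ k, r k + 1 ≤ r (k+1) := fun k => (hrspec k).2.1
      have hrmono : ∀ j k : ℕ, j ≤ k → r j ≤ r k := by
        intro j k hjk
        induction k with
        | zero => simp [Nat.le_zero.1 hjk]
        | succ k ih =>
          rcases Nat.lt_or_ge j (k+1) with h | h
          · exact (ih (Nat.lt_succ_iff.1 h)).trans (by linarith [hrstep k])
          · have hjk' : j = k+1 := le_antisymm hjk h
            simp [hjk']
      have hrge : ∀ k : ℕ, (k : ℝ) ≤ r k := by
        intro k
        induction k with
        | zero => simp [show r 0 = 0 from rfl]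
        | succ k ih => push_cast; linarith [hrstep k, ih]
      choose Smax hSsub hSind hScard using fun R : ℝ => alph_spec (Adj := Adj) (hdisc R)
      set A := ⋃ k : ℕ, (Smax (r (k+1)) \ B (r k)) with hA
      have hAV : A ⊆ V := Set.iUnion_subset fun k z hz => ((hSsub _) hz.1).1
      have key : ∀ (j k : ℕ) (x y : Fin n → ℝ), j ≤ k →
          x ∈ Smax (r (j+1)) \ B (r j) → y ∈ Smax (r (k+1)) \ B (r k) → Adj x y → False := by
        intro j k x y hjk hx hy hadj
        rcases eq_or_lt_of_le hjk with rfl | hlt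
        · exact hSind (r (j+1)) x hx.1 y hy.1 hadj
        · have hx' : x ∈ V ∩ box n (r k) :=
            ⟨((hSsub _) hx.1).1, box_mono (hrmono (j+1) k hlt) (((hSsub _) hx.1).2)⟩
          exact hy.2 (hBmem (r k) x y hx' ((hSsub _) hy.1).1 hadj)
      have hAind : ∀ x ∈ A, ∀ y ∈ A, ¬ Adj x y := by
        intro x hx y hy hadj
        obtain ⟨j, hxj⟩ := Set.mem_iUnion.1 hx
        obtain ⟨k, hyk⟩ := Set.mem_iUnion.1 hy
        rcases le_total j k with h | h
        · exact key j k x y h hxj hyk hadj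
        · exact key k j y x h hyk hxj (hsym hadj)
      have hcount2 : ∀ k : ℕ, L - 2 / ((k:ℝ)+1) ≤ gratio n V A (r (k+1)) := by
        intro k
        obtain ⟨h3, h1, h2⟩ := hrspec k
        have hb : ((k:ℝ)+1) * (((B (r k)).ncard : ℝ) + 1) ≤ ((V ∩ box n (r (k+1))).ncard : ℝ) := by
          exact_mod_cast h2
        have hcpos : (0:ℝ) < ((V ∩ box n (r (k+1))).ncard : ℝ) := by
          have h01 : (0:ℝ) < ((k:ℝ)+1) * (((B (r k)).ncard : ℝ) + 1) := by positivity
          linarith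
        have hsubA : Smax (r (k+1)) \ B (r k) ⊆ A ∩ box n (r (k+1)) := fun z hz =>
          ⟨Set.mem_iUnion.2 ⟨k, hz⟩, ((hSsub _) hz.1).2⟩
        have hAfin : (A ∩ box n (r (k+1))).Finite :=
          (hdisc _).subset (inter_subset_inter hAV Subset.rfl)
        have hnat : alph n V Adj (r (k+1)) ≤ (A ∩ box n (r (k+1))).ncard + (B (r k)).ncard := by
          calc alph n V Adj (r (k+1)) = (Smax (r (k+1))).ncard := (hScard _).symm
          _ ≤ (Smax (r (k+1)) \ B (r k)).ncard + (B (r k)).ncard :=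
              Set.ncard_le_ncard_diff_add_ncard _ _ (hBfin _)
          _ ≤ _ := Nat.add_le_add_right (Set.ncard_le_ncard hsubA hAfin) _
        have hreal : (alph n V Adj (r (k+1)) : ℝ) ≤
            ((A ∩ box n (r (k+1))).ncard : ℝ) + ((B (r k)).ncard : ℝ) := by exact_mod_cast hnat
        have hk0 : (0:ℝ) ≤ (k:ℝ) := Nat.cast_nonneg k
        have hbdiv : ((B (r k)).ncard : ℝ) / ((V ∩ box n (r (k+1))).ncard : ℝ) ≤ 1 / ((k:ℝ)+1) := by
          rw [div_le_div_iff₀ hcpos (by positivity)]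
          nlinarith [hb]
        have hmain : ratio n V Adj (r (k+1)) - 1 / ((k:ℝ)+1) ≤ gratio n V A (r (k+1)) := by
          unfold ratio gratio
          have hdd := div_le_div_nonneg_right hreal hcpos.le
          rw [add_div] at hdd
          linarith
        have h2div : (2:ℝ) / ((k:ℝ)+1) = 1/((k:ℝ)+1) + 1/((k:ℝ)+1) := by ring
        linarith
      refine ⟨A, hAV, hAind, ?_⟩
      refine le_of_forall_pos_le_add ?_
      intro ε hε
      have hfreq : ∃ᶠ R in Filter.atTop, L - ε ≤ gratio n V A R := by
        rw [Filter.frequently_atTop]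
        intro M
        obtain ⟨k₁, hk₁⟩ := exists_nat_ge M
        obtain ⟨k₂, hk₂⟩ := exists_nat_gt (2/ε)
        refine ⟨r (max k₁ k₂ + 1), ?_, ?_⟩
        · calc M ≤ (k₁ : ℝ) := hk₁
          _ ≤ ((max k₁ k₂ + 1 : ℕ) : ℝ) := by
              exact_mod_cast Nat.le_succ_of_le (le_max_left _ _)
          _ ≤ r (max k₁ k₂ + 1) := hrge _
        · refine le_trans ?_ (hcount2 (max k₁ k₂))
          have hk2' : 2/ε < ((max k₁ k₂ : ℕ) : ℝ) + 1 := by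
            have : (k₂ : ℝ) ≤ ((max k₁ k₂ : ℕ) : ℝ) := by exact_mod_cast le_max_right k₁ k₂
            linarith
          have h2 : 2 < ε * (((max k₁ k₂ : ℕ) : ℝ) + 1) := by
            rw [div_lt_iff₀ hε] at hk2'
            linarith
          have h3 : 2 / (((max k₁ k₂ : ℕ) : ℝ) + 1) < ε := by
            rw [div_lt_iff₀ (by positivity)]
            linarith
          linarith
      have hfin := Filter.le_limsup_of_frequently_le hfreq (hgb A hAV)
      linarith
  obtain ⟨A, hAV, hAind, hge⟩ := hex
  have hmemD : Filter.limsup (gratio n V A) Filter.atTop ∈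
      {d : ℝ | ∃ A ⊆ V, (∀ x ∈ A, ∀ y ∈ A, ¬ Adj x y) ∧
        d = Filter.limsup (gratio n V A) Filter.atTop} := ⟨A, hAV, hAind, rfl⟩
  exact le_antisymm (csSup_le ⟨_, hmemD⟩ hub) (hge.trans (le_csSup ⟨L, hub⟩ hmemD))
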